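/- Lemma 3D: let f : A ⊢ B be an arrow term of DS, and for i ∈ {1,2} let x_i in A and y_i in B be occurrences of the letter p_i that are linked in f. If A has a subformula occurrence A₁ ∨ A₂ such that x_i occurs in A_i, then B has a subformula occurrence B₁ ∨ B₂ or B₂ ∨ B₁ such that y_i occurs in B_i. -/

import Mathlib

/-! ### The category Br of Brauerian split equivalences of finite ordinals

An arrow `m ⊢ n` of `Br` is represented as a relation on `ℕ ⊕ ℕ`, where
`Sum.inl i` (with `i < m`) is the source copy `i_s` and `Sum.inr j`
(with `j < n`) is the target copy `j_t`. -/

abbrev GRel : Type := (ℕ ⊕ ℕ) → (ℕ ⊕ ℕ) → Prop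

/-- The identity arrow of `Br` on `n`: transversals `{i_s, i_t}` for `i < n`. -/
def gId (n : ℕ) : GRel := fun u v =>
  ∃ i, i < n ∧ (u = Sum.inl i ∨ u = Sum.inr i) ∧ (v = Sum.inl i ∨ v = Sum.inr i)

/-- The Brauerian split equivalence whose transversals are `{i_s, (φ i)_t}` for `i < m`. -/
def gFun (m : ℕ) (φ : ℕ → ℕ) : GRel := fun u v =>
  ∃ i, i < m ∧ (u = Sum.inl i ∨ u = Sum.inr (φ i)) ∧ (v = Sum.inl i ∨ v = Sum.inr (φ i))

/-- The block transposition exchanging the first `a` and the last `b` elements. -/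
def gSwap (a b : ℕ) : GRel :=
  gFun (a + b) (fun i => if i < a then i + b else i - a)

/-- `G Δ̂∧_{B,A}` with `a = GA`, `b = GB`: identity transversals on the stem `A`
together with caps joining the two copies of each letter occurrence of `B` in
the crown `¬B ∨ B` of the target. -/
def gDelta (a b : ℕ) : GRel := fun u v =>
  (∃ i, i < a ∧ (u = Sum.inl i ∨ u = Sum.inr i) ∧ (v = Sum.inl i ∨ v = Sum.inr i)) ∨
  (∃ j, j < b ∧ (u = Sum.inr (a + j) ∨ u = Sum.inr (a + b + j)) ∧
                (v = Sum.inr (a + j) ∨ v = Sum.inr (a + b + j)))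

/-- `G Σ̂∨_{B,A}` with `a = GA`, `b = GB`: identity transversals on the stem `A`
together with cups joining the two copies of each letter occurrence of `B` in
the crown `B ∧ ¬B` of the source. -/
def gSigma (a b : ℕ) : GRel := fun u v =>
  (∃ i, i < a ∧ (u = Sum.inl (2*b + i) ∨ u = Sum.inr i) ∧
                (v = Sum.inl (2*b + i) ∨ v = Sum.inr i)) ∨
  (∃ j, j < b ∧ (u = Sum.inl j ∨ u = Sum.inl (b + j)) ∧
                (v = Sum.inl j ∨ v = Sum.inl (b + j)))

/-- Composition `P ∗ R` in `Br`: glue along the middle copy and take the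
transitive closure, restricted to the outer copies. -/
def gComp (Pr R : GRel) : GRel := fun u v =>
  Relation.TransGen
    (fun x y : ℕ ⊕ ℕ ⊕ ℕ =>
      (∃ x' y', Sum.map id Sum.inl x' = x ∧ Sum.map id Sum.inl y' = y ∧ R x' y') ∨
      (∃ x' y', Sum.inr x' = x ∧ Sum.inr y' = y ∧ Pr x' y'))
    (Sum.map id Sum.inr u) (Sum.map id Sum.inr v)

/-- Shift a split relation by `a` on the source side and by `d` on the target side. -/
def gShift (a d : ℕ) (R : GRel) : GRel := fun u v =>
  ∃ u' v', R u' v' ∧ u = Sum.map (· + a) (· + d) u' ∧ v = Sum.map (· + a) (· + d) v'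

/-- Disjoint union of split relations: `G(f ξ g) = Gf ∪ Gg_{+GD}^{+GA}`. -/
def gPar (a d : ℕ) (R S : GRel) : GRel := fun u v => R u v ∨ gShift a d S u v
/-! ### The language L∧,∨ generated from the set `P` of letters -/

inductive Form (P : Type) : Type
  | letter : P → Form P
  | conj : Form P → Form P → Form P
  | disj : Form P → Form P → Form P

infixr:70 " ⋏ " => Form.conj
infixr:66 " ⋎ " => Form.disj

/-- The number of occurrences of letters in a formula (the object map of `G`). -/
def Form.size {P : Type} : Form P → ℕ
  | .letter _ => 1
  | .conj A B => A.size + B.size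
  | .disj A B => A.size + B.size
/-! ### Arrow terms of the free symmetric net category DS -/

inductive Term (P : Type) : Form P → Form P → Type
  | id (A : Form P) : Term P A A
  | comp {A B C : Form P} : Term P B C → Term P A B → Term P A C
  | conj {A B D E : Form P} : Term P A D → Term P B E → Term P (A ⋏ B) (D ⋏ E)
  | disj {A B D E : Form P} : Term P A D → Term P B E → Term P (A ⋎ B) (D ⋎ E)
  | bConjTo (A B C : Form P) : Term P (A ⋏ (B ⋏ C)) ((A ⋏ B) ⋏ C)
  | bConjFrom (A B C : Form P) : Term P ((A ⋏ B) ⋏ C) (A ⋏ (B ⋏ C))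
  | bDisjTo (A B C : Form P) : Term P (A ⋎ (B ⋎ C)) ((A ⋎ B) ⋎ C)
  | bDisjFrom (A B C : Form P) : Term P ((A ⋎ B) ⋎ C) (A ⋎ (B ⋎ C))
  | cConj (A B : Form P) : Term P (A ⋏ B) (B ⋏ A)
  | cDisj (A B : Form P) : Term P (B ⋎ A) (A ⋎ B)
  | d (A B C : Form P) : Term P (A ⋏ (B ⋎ C)) ((A ⋏ B) ⋎ C)

infixr:80 " ⬝ " => Term.comp
infixr:70 " ⊼ " => Term.conj
infixr:66 " ⊽ " => Term.disj

/-- The arrow `d^R_{C,B,A} : (C∨B)∧A ⊢ C∨(B∧A)`. -/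
def dR {P : Type} (C B A : Form P) : Term P ((C ⋎ B) ⋏ A) (C ⋎ (B ⋏ A)) :=
  Term.cDisj C (B ⋏ A) ⬝ ((Term.cConj A B ⊽ Term.id C) ⬝
    (Term.d A B C ⬝ ((Term.id A ⊼ Term.cDisj B C) ⬝ Term.cConj (C ⋎ B) A)))
/-! ### The equations of DS, imposed on arrow terms -/

inductive Eqv {P : Type} : ∀ {A B : Form P}, Term P A B → Term P A B → Prop
  -- equivalence and congruence
  | refl {A B : Form P} (f : Term P A B) : Eqv f f
  | symm {A B : Form P} {f g : Term P A B} : Eqv f g → Eqv g f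
  | trans {A B : Form P} {f g h : Term P A B} : Eqv f g → Eqv g h → Eqv f h
  | congComp {A B C : Form P} {g g' : Term P B C} {f f' : Term P A B} :
      Eqv g g' → Eqv f f' → Eqv (g ⬝ f) (g' ⬝ f')
  | congConj {A B D E : Form P} {f f' : Term P A D} {g g' : Term P B E} :
      Eqv f f' → Eqv g g' → Eqv (f ⊼ g) (f' ⊼ g')
  | congDisj {A B D E : Form P} {f f' : Term P A D} {g g' : Term P B E} :
      Eqv f f' → Eqv g g' → Eqv (f ⊽ g) (f' ⊽ g')
  -- (cat 1), (cat 2)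
  | catIdR {A B : Form P} (f : Term P A B) : Eqv (f ⬝ Term.id A) f
  | catIdL {A B : Form P} (f : Term P A B) : Eqv (Term.id B ⬝ f) f
  | catAssoc {A B C D : Form P} (f : Term P A B) (g : Term P B C) (h : Term P C D) :
      Eqv (h ⬝ (g ⬝ f)) ((h ⬝ g) ⬝ f)
  -- bifunctorial equations (ξ 1), (ξ 2)
  | conjOne (A B : Form P) : Eqv (Term.id A ⊼ Term.id B) (Term.id (A ⋏ B))
  | disjOne (A B : Form P) : Eqv (Term.id A ⊽ Term.id B) (Term.id (A ⋎ B))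
  | conjTwo {A₁ B₁ C₁ A₂ B₂ C₂ : Form P} (g₁ : Term P B₁ C₁) (f₁ : Term P A₁ B₁)
      (g₂ : Term P B₂ C₂) (f₂ : Term P A₂ B₂) :
      Eqv ((g₁ ⬝ f₁) ⊼ (g₂ ⬝ f₂)) ((g₁ ⊼ g₂) ⬝ (f₁ ⊼ f₂))
  | disjTwo {A₁ B₁ C₁ A₂ B₂ C₂ : Form P} (g₁ : Term P B₁ C₁) (f₁ : Term P A₁ B₁)
      (g₂ : Term P B₂ C₂) (f₂ : Term P A₂ B₂) :
      Eqv ((g₁ ⬝ f₁) ⊽ (g₂ ⬝ f₂)) ((g₁ ⊽ g₂) ⬝ (f₁ ⊽ f₂))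
  -- naturality equations
  | bConjNat {A B C D E F : Form P} (f : Term P A D) (g : Term P B E) (h : Term P C F) :
      Eqv (((f ⊼ g) ⊼ h) ⬝ Term.bConjTo A B C) (Term.bConjTo D E F ⬝ (f ⊼ (g ⊼ h)))
  | bDisjNat {A B C D E F : Form P} (f : Term P A D) (g : Term P B E) (h : Term P C F) :
      Eqv (((f ⊽ g) ⊽ h) ⬝ Term.bDisjTo A B C) (Term.bDisjTo D E F ⬝ (f ⊽ (g ⊽ h)))
  | cConjNat {A B D E : Form P} (f : Term P A D) (g : Term P B E) :
      Eqv ((g ⊼ f) ⬝ Term.cConj A B) (Term.cConj D E ⬝ (f ⊼ g))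
  | cDisjNat {A B D E : Form P} (f : Term P A D) (g : Term P B E) :
      Eqv ((g ⊽ f) ⬝ Term.cDisj B A) (Term.cDisj E D ⬝ (f ⊽ g))
  | dNat {A B C D E F : Form P} (f : Term P A D) (g : Term P B E) (h : Term P C F) :
      Eqv (((f ⊼ g) ⊽ h) ⬝ Term.d A B C) (Term.d D E F ⬝ (f ⊼ (g ⊽ h)))
  -- (b̂ξ b̂ξ)
  | bConjIso₁ (A B C : Form P) :
      Eqv (Term.bConjFrom A B C ⬝ Term.bConjTo A B C) (Term.id (A ⋏ (B ⋏ C)))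
  | bConjIso₂ (A B C : Form P) :
      Eqv (Term.bConjTo A B C ⬝ Term.bConjFrom A B C) (Term.id ((A ⋏ B) ⋏ C))
  | bDisjIso₁ (A B C : Form P) :
      Eqv (Term.bDisjFrom A B C ⬝ Term.bDisjTo A B C) (Term.id (A ⋎ (B ⋎ C)))
  | bDisjIso₂ (A B C : Form P) :
      Eqv (Term.bDisjTo A B C ⬝ Term.bDisjFrom A B C) (Term.id ((A ⋎ B) ⋎ C))
  -- (b̂ξ 5)
  | bConjPent (A B C D : Form P) :
      Eqv (Term.bConjFrom A B (C ⋏ D) ⬝ Term.bConjFrom (A ⋏ B) C D)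
        ((Term.id A ⊼ Term.bConjFrom B C D) ⬝
          (Term.bConjFrom A (B ⋏ C) D ⬝ (Term.bConjFrom A B C ⊼ Term.id D)))
  | bDisjPent (A B C D : Form P) :
      Eqv (Term.bDisjFrom A B (C ⋎ D) ⬝ Term.bDisjFrom (A ⋎ B) C D)
        ((Term.id A ⊽ Term.bDisjFrom B C D) ⬝
          (Term.bDisjFrom A (B ⋎ C) D ⬝ (Term.bDisjFrom A B C ⊽ Term.id D)))
  -- (ĉ∧ ĉ∧), (ĉ∨ ĉ∨)
  | cConjIso (A B : Form P) : Eqv (Term.cConj B A ⬝ Term.cConj A B) (Term.id (A ⋏ B))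
  | cDisjIso (A B : Form P) : Eqv (Term.cDisj A B ⬝ Term.cDisj B A) (Term.id (A ⋎ B))
  -- (b̂∧ ĉ∧), (b̂∨ ĉ∨)
  | bcConj (A B C : Form P) :
      Eqv ((Term.id B ⊼ Term.cConj C A) ⬝ (Term.bConjFrom B C A ⬝
            (Term.cConj A (B ⋏ C) ⬝ (Term.bConjFrom A B C ⬝ (Term.cConj B A ⊼ Term.id C)))))
        (Term.bConjFrom B A C)
  | bcDisj (A B C : Form P) :
      Eqv ((Term.id B ⊽ Term.cDisj A C) ⬝ (Term.bDisjFrom B C A ⬝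
            (Term.cDisj (B ⋎ C) A ⬝ (Term.bDisjFrom A B C ⬝ (Term.cDisj A B ⊽ Term.id C)))))
        (Term.bDisjFrom B A C)
  -- (d ∧), (d ∨)
  | dConj (A B C D : Form P) :
      Eqv ((Term.bConjFrom A B C ⊽ Term.id D) ⬝ Term.d (A ⋏ B) C D)
        (Term.d A (B ⋏ C) D ⬝ ((Term.id A ⊼ Term.d B C D) ⬝ Term.bConjFrom A B (C ⋎ D)))
  | dDisj (D C B A : Form P) :
      Eqv (Term.d D C (B ⋎ A) ⬝ (Term.id D ⊼ Term.bDisjFrom C B A))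
        (Term.bDisjFrom (D ⋏ C) B A ⬝ ((Term.d D C B ⊽ Term.id A) ⬝ Term.d D (C ⋎ B) A))
  -- (d b̂∧), (d b̂∨)
  | dBConj (A B C D : Form P) :
      Eqv (dR (A ⋏ B) C D ⬝ (Term.d A B C ⊼ Term.id D))
        (Term.d A B (C ⋏ D) ⬝ ((Term.id A ⊼ dR B C D) ⬝ Term.bConjFrom A (B ⋎ C) D))
  | dBDisj (D C B A : Form P) :
      Eqv ((Term.id D ⊽ Term.d C B A) ⬝ dR D C (B ⋎ A))
        (Term.bDisjFrom D (C ⋏ B) A ⬝ ((dR D C B ⊽ Term.id A) ⬝ Term.d (D ⋎ C) B A))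
/-- The functor `G` from DS to Br on arrow terms. -/
def Term.G {P : Type} : ∀ {A B : Form P}, Term P A B → GRel
  | _, _, .id A => gId A.size
  | _, _, .comp g f => gComp (Term.G g) (Term.G f)
  | _, _, @Term.conj _ A _ D _ f g => gPar A.size D.size (Term.G f) (Term.G g)
  | _, _, @Term.disj _ A _ D _ f g => gPar A.size D.size (Term.G f) (Term.G g)
  | _, _, .bConjTo A B C => gId (A.size + (B.size + C.size))
  | _, _, .bConjFrom A B C => gId (A.size + B.size + C.size)
  | _, _, .bDisjTo A B C => gId (A.size + (B.size + C.size))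
  | _, _, .bDisjFrom A B C => gId (A.size + B.size + C.size)
  | _, _, .cConj A B => gSwap A.size B.size
  | _, _, .cDisj A B => gSwap B.size A.size
  | _, _, .d A B C => gId (A.size + (B.size + C.size))
/-! ### Occurrences of letters and subformula occurrences -/

/-- The letter at the `(n+1)`-th letter-occurrence position of a formula
(`n` counted from `0`, from the left). -/
def Form.letterAt {P : Type} : Form P → ℕ → Option P
  | .letter p, 0 => some p
  | .letter _, _ + 1 => none
  | .conj A B, n => if n < A.size then A.letterAt n else B.letterAt (n - A.size)
  | .disj A B, n => if n < A.size then A.letterAt n else B.letterAt (n - A.size)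

/-- Directions for addressing subformula occurrences. -/
inductive Dir : Type
  | l
  | r
deriving DecidableEq

/-- The subformula occurrence of a formula at a given position (path). -/
def Form.subAt {P : Type} : Form P → List Dir → Option (Form P)
  | A, [] => some A
  | .conj A _, .l :: π => A.subAt π
  | .conj _ B, .r :: π => B.subAt π
  | .disj A _, .l :: π => A.subAt π
  | .disj _ B, .r :: π => B.subAt π
  | .letter _, _ :: _ => none

/-- The number of letter occurrences strictly to the left of the subformula
occurrence at a given position. -/
def Form.offsetAt {P : Type} : Form P → List Dir → ℕ
  | _, [] => 0
  | .conj A _, .l :: π => A.offsetAt π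
  | .conj A B, .r :: π => A.size + B.offsetAt π
  | .disj A _, .l :: π => A.offsetAt π
  | .disj A B, .r :: π => A.size + B.offsetAt π
  | .letter _, _ :: _ => 0

/-- The `(n+1)`-th occurrence of a letter in `A` is *linked* in `f : A ⊢ B` to the
`(m+1)`-th occurrence of the same letter in `B` when `{n_s, m_t}` is a member of
the partition corresponding to `Gf`. -/
def Linked {P : Type} {A B : Form P} (f : Term P A B) (n m : ℕ) : Prop :=
  Term.G f (Sum.inl n) (Sum.inr m)


namespace Lemma3D

variable {P : Type}

lemma Form.size_pos (A : Form P) : 0 < A.size := by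
  induction A with
  | letter p => simp [Form.size]
  | conj A B ihA ihB => simp [Form.size]; omega
  | disj A B ihA ihB => simp [Form.size]; omega

lemma subAt_size : ∀ (τ : List Dir) (A D : Form P), A.subAt τ = some D →
    A.offsetAt τ + D.size ≤ A.size := by
  intro τ
  induction τ with
  | nil =>
    intro A D h
    simp [Form.subAt] at h
    subst h
    simp [Form.offsetAt]
  | cons d τ ih =>
    intro A D h
    cases A with
    | letter p => simp [Form.subAt] at h
    | conj X Y =>
      cases d with
      | l => simp [Form.subAt] at h; have := ih X D h; simp [Form.offsetAt, Form.size]; omega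
      | r => simp [Form.subAt] at h; have := ih Y D h; simp [Form.offsetAt, Form.size]; omega
    | disj X Y =>
      cases d with
      | l => simp [Form.subAt] at h; have := ih X D h; simp [Form.offsetAt, Form.size]; omega
      | r => simp [Form.subAt] at h; have := ih Y D h; simp [Form.offsetAt, Form.size]; omega

/-- `n₁` and `n₂` are separated by a disjunction occurrence of `A`,
`n₁` on the left and `n₂` on the right. -/
def DSep : Form P → ℕ → ℕ → Prop
  | .letter _, _, _ => False
  | .conj A B, n₁, n₂ =>
      (n₁ < A.size ∧ n₂ < A.size ∧ DSep A n₁ n₂) ∨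
      (A.size ≤ n₁ ∧ n₁ < A.size + B.size ∧ A.size ≤ n₂ ∧ n₂ < A.size + B.size ∧
        DSep B (n₁ - A.size) (n₂ - A.size))
  | .disj A B, n₁, n₂ =>
      (n₁ < A.size ∧ n₂ < A.size ∧ DSep A n₁ n₂) ∨
      (A.size ≤ n₁ ∧ n₁ < A.size + B.size ∧ A.size ≤ n₂ ∧ n₂ < A.size + B.size ∧
        DSep B (n₁ - A.size) (n₂ - A.size)) ∨
      (n₁ < A.size ∧ A.size ≤ n₂ ∧ n₂ < A.size + B.size)

lemma DSep.lt : ∀ {A : Form P} {n₁ n₂ : ℕ}, DSep A n₁ n₂ → n₁ < A.size ∧ n₂ < A.size := by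
  intro A
  induction A with
  | letter p => intro _ _ h; exact h.elim
  | conj A B ihA ihB =>
    intro n₁ n₂ h
    rcases h with ⟨h1, h2, _⟩ | ⟨h1, h2, h3, h4, _⟩ <;> simp [Form.size] <;> omega
  | disj A B ihA ihB =>
    intro n₁ n₂ h
    rcases h with ⟨h1, h2, _⟩ | ⟨h1, h2, h3, h4, _⟩ | ⟨h1, h2, h3⟩ <;> simp [Form.size] <;> omega

lemma path_dsep : ∀ (π : List Dir) (A A₁ A₂ : Form P) (σ₁ σ₂ : List Dir) (p₁ p₂ : P),
    A.subAt π = some (A₁ ⋎ A₂) →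
    A.subAt (π ++ Dir.l :: σ₁) = some (.letter p₁) →
    A.subAt (π ++ Dir.r :: σ₂) = some (.letter p₂) →
    DSep A (A.offsetAt (π ++ Dir.l :: σ₁)) (A.offsetAt (π ++ Dir.r :: σ₂)) := by
  intro π
  induction π with
  | nil =>
    intro A A₁ A₂ σ₁ σ₂ p₁ p₂ hsub h1 h2
    simp [Form.subAt] at hsub
    subst hsub
    simp [Form.subAt] at h1 h2
    have b1 := subAt_size σ₁ A₁ _ h1
    have b2 := subAt_size σ₂ A₂ _ h2
    simp [Form.size] at b1 b2
    simp only [List.nil_append]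
    refine Or.inr (Or.inr ?_)
    simp [Form.offsetAt]
    omega
  | cons d π ih =>
    intro A A₁ A₂ σ₁ σ₂ p₁ p₂ hsub h1 h2
    cases A with
    | letter p => simp [Form.subAt] at hsub
    | conj X Y =>
      cases d with
      | l =>
        simp only [List.cons_append, Form.subAt] at hsub h1 h2
        have hd := ih X A₁ A₂ σ₁ σ₂ p₁ p₂ hsub h1 h2
        have := hd.lt
        simp only [List.cons_append, Form.offsetAt, DSep]
        exact Or.inl ⟨this.1, this.2, hd⟩
      | r =>
        simp only [List.cons_append, Form.subAt] at hsub h1 h2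
        have hd := ih Y A₁ A₂ σ₁ σ₂ p₁ p₂ hsub h1 h2
        have := hd.lt
        simp only [List.cons_append, Form.offsetAt, DSep, List.append_eq]
        refine Or.inr ⟨by omega, by omega, by omega, by omega, ?_⟩
        simpa [Nat.add_sub_cancel_left] using hd
    | disj X Y =>
      cases d with
      | l =>
        simp only [List.cons_append, Form.subAt] at hsub h1 h2
        have hd := ih X A₁ A₂ σ₁ σ₂ p₁ p₂ hsub h1 h2
        have := hd.lt
        simp only [List.cons_append, Form.offsetAt, DSep]
        exact Or.inl ⟨this.1, this.2, hd⟩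
      | r =>
        simp only [List.cons_append, Form.subAt] at hsub h1 h2
        have hd := ih Y A₁ A₂ σ₁ σ₂ p₁ p₂ hsub h1 h2
        have := hd.lt
        simp only [List.cons_append, Form.offsetAt, DSep, List.append_eq]
        refine Or.inr (Or.inl ⟨by omega, by omega, by omega, by omega, ?_⟩)
        simpa [Nat.add_sub_cancel_left] using hd

lemma dsep_path : ∀ (B : Form P) (m₁ m₂ : ℕ) (ρ₁ ρ₂ : List Dir) (p₁ p₂ : P),
    DSep B m₁ m₂ → B.subAt ρ₁ = some (.letter p₁) → B.subAt ρ₂ = some (.letter p₂) →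
    B.offsetAt ρ₁ = m₁ → B.offsetAt ρ₂ = m₂ →
    ∃ (ρ : List Dir) (B₁ B₂ : Form P), B.subAt ρ = some (B₁ ⋎ B₂) ∧
      (∃ σ, ρ₁ = ρ ++ Dir.l :: σ) ∧ (∃ σ, ρ₂ = ρ ++ Dir.r :: σ) := by
  intro B
  induction B with
  | letter p => intro _ _ _ _ _ _ h; exact h.elim
  | conj X Y ihX ihY =>
    intro m₁ m₂ ρ₁ ρ₂ p₁ p₂ hsep h1 h2 o1 o2
    rcases hsep with ⟨b1, b2, hd⟩ | ⟨b1, b2, b3, b4, hd⟩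
    · -- both in X : ρᵢ = l :: σᵢ
      obtain ⟨σ₁, rfl⟩ : ∃ σ, ρ₁ = Dir.l :: σ := by
        cases ρ₁ with
        | nil => simp [Form.subAt] at h1
        | cons d σ =>
          cases d with
          | l => exact ⟨σ, rfl⟩
          | r => simp [Form.offsetAt] at o1; omega
      obtain ⟨σ₂, rfl⟩ : ∃ σ, ρ₂ = Dir.l :: σ := by
        cases ρ₂ with
        | nil => simp [Form.subAt] at h2
        | cons d σ =>
          cases d with
          | l => exact ⟨σ, rfl⟩
          | r => simp [Form.offsetAt] at o2; omega
      simp [Form.subAt] at h1 h2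
      simp [Form.offsetAt] at o1 o2
      obtain ⟨ρ, B₁, B₂, hs, ⟨τ₁, e1⟩, ⟨τ₂, e2⟩⟩ := ihX m₁ m₂ σ₁ σ₂ p₁ p₂ hd h1 h2 o1 o2
      exact ⟨Dir.l :: ρ, B₁, B₂, by simpa [Form.subAt] using hs,
        ⟨τ₁, by simp [e1]⟩, ⟨τ₂, by simp [e2]⟩⟩
    · -- both in Y : ρᵢ = r :: σᵢ
      obtain ⟨σ₁, rfl⟩ : ∃ σ, ρ₁ = Dir.r :: σ := by
        cases ρ₁ with
        | nil => simp [Form.subAt] at h1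
        | cons d σ =>
          cases d with
          | r => exact ⟨σ, rfl⟩
          | l =>
            simp [Form.subAt] at h1
            have := subAt_size σ X _ h1
            simp [Form.offsetAt] at o1
            simp [Form.size] at this
            omega
      obtain ⟨σ₂, rfl⟩ : ∃ σ, ρ₂ = Dir.r :: σ := by
        cases ρ₂ with
        | nil => simp [Form.subAt] at h2
        | cons d σ =>
          cases d with
          | r => exact ⟨σ, rfl⟩
          | l =>
            simp [Form.subAt] at h2
            have := subAt_size σ X _ h2
            simp [Form.offsetAt] at o2
            simp [Form.size] at this
            omega
      simp [Form.subAt] at h1 h2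
      simp [Form.offsetAt] at o1 o2
      obtain ⟨ρ, B₁, B₂, hs, ⟨τ₁, e1⟩, ⟨τ₂, e2⟩⟩ :=
        ihY (m₁ - X.size) (m₂ - X.size) σ₁ σ₂ p₁ p₂ hd h1 h2 (by omega) (by omega)
      exact ⟨Dir.r :: ρ, B₁, B₂, by simpa [Form.subAt] using hs,
        ⟨τ₁, by simp [e1]⟩, ⟨τ₂, by simp [e2]⟩⟩
  | disj X Y ihX ihY =>
    intro m₁ m₂ ρ₁ ρ₂ p₁ p₂ hsep h1 h2 o1 o2
    rcases hsep with ⟨b1, b2, hd⟩ | ⟨b1, b2, b3, b4, hd⟩ | ⟨b1, b2, b3⟩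
    · obtain ⟨σ₁, rfl⟩ : ∃ σ, ρ₁ = Dir.l :: σ := by
        cases ρ₁ with
        | nil => simp [Form.subAt] at h1
        | cons d σ =>
          cases d with
          | l => exact ⟨σ, rfl⟩
          | r => simp [Form.offsetAt] at o1; omega
      obtain ⟨σ₂, rfl⟩ : ∃ σ, ρ₂ = Dir.l :: σ := by
        cases ρ₂ with
        | nil => simp [Form.subAt] at h2
        | cons d σ =>
          cases d with
          | l => exact ⟨σ, rfl⟩
          | r => simp [Form.offsetAt] at o2; omega
      simp [Form.subAt] at h1 h2
      simp [Form.offsetAt] at o1 o2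
      obtain ⟨ρ, B₁, B₂, hs, ⟨τ₁, e1⟩, ⟨τ₂, e2⟩⟩ := ihX m₁ m₂ σ₁ σ₂ p₁ p₂ hd h1 h2 o1 o2
      exact ⟨Dir.l :: ρ, B₁, B₂, by simpa [Form.subAt] using hs,
        ⟨τ₁, by simp [e1]⟩, ⟨τ₂, by simp [e2]⟩⟩
    · obtain ⟨σ₁, rfl⟩ : ∃ σ, ρ₁ = Dir.r :: σ := by
        cases ρ₁ with
        | nil => simp [Form.subAt] at h1
        | cons d σ =>
          cases d with
          | r => exact ⟨σ, rfl⟩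
          | l =>
            simp [Form.subAt] at h1
            have := subAt_size σ X _ h1
            simp [Form.offsetAt] at o1
            simp [Form.size] at this
            omega
      obtain ⟨σ₂, rfl⟩ : ∃ σ, ρ₂ = Dir.r :: σ := by
        cases ρ₂ with
        | nil => simp [Form.subAt] at h2
        | cons d σ =>
          cases d with
          | r => exact ⟨σ, rfl⟩
          | l =>
            simp [Form.subAt] at h2
            have := subAt_size σ X _ h2
            simp [Form.offsetAt] at o2
            simp [Form.size] at this
            omega
      simp [Form.subAt] at h1 h2
      simp [Form.offsetAt] at o1 o2
      obtain ⟨ρ, B₁, B₂, hs, ⟨τ₁, e1⟩, ⟨τ₂, e2⟩⟩ :=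
        ihY (m₁ - X.size) (m₂ - X.size) σ₁ σ₂ p₁ p₂ hd h1 h2 (by omega) (by omega)
      exact ⟨Dir.r :: ρ, B₁, B₂, by simpa [Form.subAt] using hs,
        ⟨τ₁, by simp [e1]⟩, ⟨τ₂, by simp [e2]⟩⟩
    · -- the crossing case
      obtain ⟨σ₁, rfl⟩ : ∃ σ, ρ₁ = Dir.l :: σ := by
        cases ρ₁ with
        | nil => simp [Form.subAt] at h1
        | cons d σ =>
          cases d with
          | l => exact ⟨σ, rfl⟩
          | r => simp [Form.offsetAt] at o1; omega
      obtain ⟨σ₂, rfl⟩ : ∃ σ, ρ₂ = Dir.r :: σ := by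
        cases ρ₂ with
        | nil => simp [Form.subAt] at h2
        | cons d σ =>
          cases d with
          | r => exact ⟨σ, rfl⟩
          | l =>
            simp [Form.subAt] at h2
            have := subAt_size σ X _ h2
            simp [Form.offsetAt] at o2
            simp [Form.size] at this
            omega
      exact ⟨[], X, Y, by simp [Form.subAt], ⟨σ₁, rfl⟩, ⟨σ₂, rfl⟩⟩

end Lemma3D
namespace Lemma3D

variable {P : Type}

/-- `f`'s split relation is the (symmetrized, reflexivized) graph of the
bijective link relation `Linked f`. -/
structure Good {A B : Form P} (f : Term P A B) : Prop where
  graph : ∀ u v, f.G u v ↔ ∃ i j, Linked f i j ∧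
      (u = Sum.inl i ∨ u = Sum.inr j) ∧ (v = Sum.inl i ∨ v = Sum.inr j)
  func : ∀ {i j j'}, Linked f i j → Linked f i j' → j = j'
  inj : ∀ {i i' j}, Linked f i j → Linked f i' j → i = i'
  total : ∀ i, i < A.size → ∃ j, Linked f i j
  surj : ∀ j, j < B.size → ∃ i, Linked f i j
  bl : ∀ {i j}, Linked f i j → i < A.size
  br : ∀ {i j}, Linked f i j → j < B.size

lemma good_gId {A B : Form P} (f : Term P A B) (hG : f.G = gId A.size)
    (hs : B.size = A.size) : Good f := by
  have hlink : ∀ i j, Linked f i j ↔ (i < A.size ∧ j = i) := by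
    intro i j
    unfold Linked
    rw [hG]
    constructor
    · rintro ⟨k, hk, (h1 | h1), (h2 | h2)⟩ <;> simp_all
    · rintro ⟨h1, rfl⟩; exact ⟨j, h1, Or.inl rfl, Or.inr rfl⟩
  refine ⟨?_, ?_, ?_, ?_, ?_, ?_, ?_⟩
  · intro u v
    rw [hG]
    constructor
    · rintro ⟨i, hi, hu, hv⟩
      exact ⟨i, i, (hlink i i).mpr ⟨hi, rfl⟩, hu, hv⟩
    · rintro ⟨i, j, hL, hu, hv⟩
      obtain ⟨hi, rfl⟩ := (hlink i j).mp hL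
      exact ⟨j, hi, hu, hv⟩
  · intro i j j' h1 h2
    rw [hlink] at h1 h2; omega
  · intro i i' j h1 h2
    rw [hlink] at h1 h2; omega
  · intro i hi; exact ⟨i, (hlink i i).mpr ⟨hi, rfl⟩⟩
  · intro j hj; exact ⟨j, (hlink j j).mpr ⟨by omega, rfl⟩⟩
  · intro i j h; exact ((hlink i j).mp h).1
  · intro i j h; obtain ⟨h1, rfl⟩ := (hlink i j).mp h; omega

lemma good_gSwap {A B : Form P} (f : Term P A B) (a b : ℕ) (hG : f.G = gSwap a b)
    (hA : A.size = a + b) (hB : B.size = a + b) : Good f := by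
  set φ : ℕ → ℕ := fun i => if i < a then i + b else i - a with hφ
  have hlink : ∀ i j, Linked f i j ↔ (i < a + b ∧ j = φ i) := by
    intro i j
    unfold Linked
    rw [hG]
    unfold gSwap gFun
    constructor
    · rintro ⟨k, hk, (h1 | h1), (h2 | h2)⟩ <;> simp_all
    · rintro ⟨h1, rfl⟩; exact ⟨i, h1, Or.inl rfl, Or.inr rfl⟩
  have hφlt : ∀ i, i < a + b → φ i < a + b := by
    intro i hi; simp only [hφ]; split <;> omega
  have hφinj : ∀ i i', i < a + b → i' < a + b → φ i = φ i' → i = i' := by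
    intro i i' hi hi' h; simp only [hφ] at h; split at h <;> split at h <;> omega
  refine ⟨?_, ?_, ?_, ?_, ?_, ?_, ?_⟩
  · intro u v
    rw [hG]
    unfold gSwap gFun
    constructor
    · rintro ⟨i, hi, hu, hv⟩
      exact ⟨i, φ i, (hlink i (φ i)).mpr ⟨hi, rfl⟩, hu, hv⟩
    · rintro ⟨i, j, hL, hu, hv⟩
      obtain ⟨hi, rfl⟩ := (hlink i j).mp hL
      exact ⟨i, hi, hu, hv⟩
  · intro i j j' h1 h2
    obtain ⟨_, rfl⟩ := (hlink i j).mp h1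
    obtain ⟨_, rfl⟩ := (hlink i j').mp h2
    rfl
  · intro i i' j h1 h2
    obtain ⟨hi, rfl⟩ := (hlink i j).mp h1
    obtain ⟨hi', he⟩ := (hlink i' _).mp h2
    exact hφinj i i' hi hi' he
  · intro i hi; exact ⟨φ i, (hlink i (φ i)).mpr ⟨by omega, rfl⟩⟩
  · intro j hj
    rw [hB] at hj
    by_cases hjb : j < b
    · refine ⟨j + a, (hlink (j + a) j).mpr ⟨by omega, ?_⟩⟩
      simp only [hφ]
      rw [if_neg (by omega)]
      omega
    · refine ⟨j - b, (hlink (j - b) j).mpr ⟨by omega, ?_⟩⟩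
      simp only [hφ]
      rw [if_pos (by omega)]
      omega
  · intro i j h; rw [hA]; exact ((hlink i j).mp h).1
  · intro i j h
    obtain ⟨hi, rfl⟩ := (hlink i j).mp h
    rw [hB]; exact hφlt i hi

/-- Characterisation of links across a parallel composition. -/
lemma linked_gPar {A B : Form P} (f : Term P A B) (a d : ℕ) (R S : GRel)
    (hG : f.G = gPar a d R S) (i j : ℕ) :
    Linked f i j ↔ (R (Sum.inl i) (Sum.inr j) ∨
      ∃ i' j', S (Sum.inl i') (Sum.inr j') ∧ i = i' + a ∧ j = j' + d) := by
  unfold Linked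
  rw [hG]
  unfold gPar gShift
  constructor
  · rintro (h | ⟨u', v', hS, hu, hv⟩)
    · exact Or.inl h
    · cases u' with
      | inl i' =>
        cases v' with
        | inl j' => simp [Sum.map] at hv
        | inr j' =>
          simp only [Sum.map, id] at hu hv
          refine Or.inr ⟨i', j', hS, ?_, ?_⟩
          · exact Sum.inl.inj hu
          · exact Sum.inr.inj hv
      | inr i' => simp [Sum.map] at hu
  · rintro (h | ⟨i', j', hS, rfl, rfl⟩)
    · exact Or.inl h
    · exact Or.inr ⟨Sum.inl i', Sum.inr j', hS, rfl, rfl⟩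

lemma good_gPar {A B D E X Y : Form P} (f : Term P A D) (g : Term P B E)
    (F : Term P X Y) (hG : F.G = gPar A.size D.size f.G g.G)
    (hX : X.size = A.size + B.size) (hY : Y.size = D.size + E.size)
    (Hf : Good f) (Hg : Good g) : Good F := by
  have hlink : ∀ i j, Linked F i j ↔ (Linked f i j ∨
      ∃ i' j', Linked g i' j' ∧ i = i' + A.size ∧ j = j' + D.size) :=
    linked_gPar F A.size D.size f.G g.G hG
  refine ⟨?_, ?_, ?_, ?_, ?_, ?_, ?_⟩
  · intro u v
    rw [hG]
    unfold gPar gShift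
    constructor
    · rintro (h | ⟨u', v', hS, rfl, rfl⟩)
      · obtain ⟨i, j, hL, hu, hv⟩ := (Hf.graph u v).mp h
        exact ⟨i, j, (hlink i j).mpr (Or.inl hL), hu, hv⟩
      · obtain ⟨i', j', hL, hu', hv'⟩ := (Hg.graph u' v').mp hS
        refine ⟨i' + A.size, j' + D.size,
          (hlink _ _).mpr (Or.inr ⟨i', j', hL, rfl, rfl⟩), ?_, ?_⟩
        · rcases hu' with rfl | rfl
          · exact Or.inl rfl
          · exact Or.inr rfl
        · rcases hv' with rfl | rfl
          · exact Or.inl rfl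
          · exact Or.inr rfl
    · rintro ⟨i, j, hL, hu, hv⟩
      rcases (hlink i j).mp hL with hLf | ⟨i', j', hLg, rfl, rfl⟩
      · exact Or.inl ((Hf.graph u v).mpr ⟨i, j, hLf, hu, hv⟩)
      · refine Or.inr ?_
        rcases hu with rfl | rfl <;> rcases hv with rfl | rfl
        · exact ⟨Sum.inl i', Sum.inl i',
            (Hg.graph _ _).mpr ⟨i', j', hLg, Or.inl rfl, Or.inl rfl⟩, rfl, rfl⟩
        · exact ⟨Sum.inl i', Sum.inr j',
            (Hg.graph _ _).mpr ⟨i', j', hLg, Or.inl rfl, Or.inr rfl⟩, rfl, rfl⟩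
        · exact ⟨Sum.inr j', Sum.inl i',
            (Hg.graph _ _).mpr ⟨i', j', hLg, Or.inr rfl, Or.inl rfl⟩, rfl, rfl⟩
        · exact ⟨Sum.inr j', Sum.inr j',
            (Hg.graph _ _).mpr ⟨i', j', hLg, Or.inr rfl, Or.inr rfl⟩, rfl, rfl⟩
  · intro i j j' h1 h2
    rcases (hlink i j).mp h1 with hf1 | ⟨i1, j1, hg1, hi1, hj1⟩ <;>
      rcases (hlink i j').mp h2 with hf2 | ⟨i2, j2, hg2, hi2, hj2⟩
    · exact Hf.func hf1 hf2
    · have := Hf.bl hf1; omega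
    · have := Hf.bl hf2; omega
    · have hii : i1 = i2 := by omega
      subst hii
      have := Hg.func hg1 hg2; omega
  · intro i i' j h1 h2
    rcases (hlink i j).mp h1 with hf1 | ⟨i1, j1, hg1, hi1, hj1⟩ <;>
      rcases (hlink i' j).mp h2 with hf2 | ⟨i2, j2, hg2, hi2, hj2⟩
    · exact Hf.inj hf1 hf2
    · have := Hf.br hf1; omega
    · have := Hf.br hf2; omega
    · have hjj : j1 = j2 := by omega
      subst hjj
      have := Hg.inj hg1 hg2; omega
  · intro i hi
    rw [hX] at hi
    by_cases h : i < A.size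
    · obtain ⟨j, hj⟩ := Hf.total i h
      exact ⟨j, (hlink i j).mpr (Or.inl hj)⟩
    · obtain ⟨j, hj⟩ := Hg.total (i - A.size) (by omega)
      exact ⟨j + D.size, (hlink i _).mpr (Or.inr ⟨i - A.size, j, hj, by omega, rfl⟩)⟩
  · intro j hj
    rw [hY] at hj
    by_cases h : j < D.size
    · obtain ⟨i, hi⟩ := Hf.surj j h
      exact ⟨i, (hlink i j).mpr (Or.inl hi)⟩
    · obtain ⟨i, hi⟩ := Hg.surj (j - D.size) (by omega)
      exact ⟨i + A.size, (hlink _ j).mpr (Or.inr ⟨i, j - D.size, hi, rfl, by omega⟩)⟩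
  · intro i j h
    rw [hX]
    rcases (hlink i j).mp h with hf | ⟨i', j', hg, rfl, rfl⟩
    · have := Hf.bl hf; omega
    · have := Hg.bl hg; omega
  · intro i j h
    rw [hY]
    rcases (hlink i j).mp h with hf | ⟨i', j', hg, rfl, rfl⟩
    · have := Hf.br hf; omega
    · have := Hg.br hg; omega

end Lemma3D
namespace Lemma3D

variable {P : Type}

/-- The step relation glued along the middle ordinal in `gComp`. -/
def CompStep (Rf Rg : GRel) : (ℕ ⊕ ℕ ⊕ ℕ) → (ℕ ⊕ ℕ ⊕ ℕ) → Prop := fun x y =>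
  (∃ x' y', Sum.map id Sum.inl x' = x ∧ Sum.map id Sum.inl y' = y ∧ Rf x' y') ∨
  (∃ x' y', Sum.inr x' = x ∧ Sum.inr y' = y ∧ Rg x' y')

lemma gComp_eq (Pr R : GRel) : gComp Pr R = fun u v =>
    Relation.TransGen (CompStep R Pr) (Sum.map id Sum.inr u) (Sum.map id Sum.inr v) := rfl

/-- The threads of the composite: `i —f— k —g— j`. -/
def Thread (L1 L2 : ℕ → ℕ → Prop) : (ℕ ⊕ ℕ ⊕ ℕ) → (ℕ ⊕ ℕ ⊕ ℕ) → Prop := fun x y =>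
  ∃ i k j, L1 i k ∧ L2 k j ∧
    (x = Sum.inl i ∨ x = Sum.inr (Sum.inl k) ∨ x = Sum.inr (Sum.inr j)) ∧
    (y = Sum.inl i ∨ y = Sum.inr (Sum.inl k) ∨ y = Sum.inr (Sum.inr j))

lemma comp_char {A B C : Form P} (g : Term P B C) (f : Term P A B)
    (Hg : Good g) (Hf : Good f) :
    ∀ u v, (g ⬝ f).G u v ↔ ∃ i j, (∃ k, Linked f i k ∧ Linked g k j) ∧
      (u = Sum.inl i ∨ u = Sum.inr j) ∧ (v = Sum.inl i ∨ v = Sum.inr j) := by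
  have Etrans : Transitive (Thread (Linked f) (Linked g)) := by
    rintro x y z ⟨i, k, j, fik, gkj, hx, hy⟩ ⟨i', k', j', fik', gkj', hy', hz⟩
    have key : i' = i ∧ k' = k ∧ j' = j := by
      rcases hy with rfl | rfl | rfl <;> rcases hy' with h' | h' | h'
      · have hii : i' = i := by simpa using h'.symm
        have hkk : k' = k := Hf.func (hii ▸ fik') fik
        exact ⟨hii, hkk, Hg.func (hkk ▸ gkj') gkj⟩
      · exact absurd h' (by simp)
      · exact absurd h' (by simp)
      · exact absurd h' (by simp)
      · have hkk : k' = k := by simpa using h'.symm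
        have hii : i' = i := Hf.inj (hkk ▸ fik') fik
        exact ⟨hii, hkk, Hg.func (hkk ▸ gkj') gkj⟩
      · exact absurd h' (by simp)
      · exact absurd h' (by simp)
      · exact absurd h' (by simp)
      · have hjj : j' = j := by simpa using h'.symm
        have hkk : k' = k := Hg.inj (hjj ▸ gkj') gkj
        exact ⟨Hf.inj (hkk ▸ fik') fik, hkk, hjj⟩
    obtain ⟨h1, h2, h3⟩ := key
    rw [h1, h2, h3] at hz
    exact ⟨i, k, j, fik, gkj, hx, hz⟩
  have stepE : ∀ x y, CompStep f.G g.G x y → Thread (Linked f) (Linked g) x y := by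
    rintro x y (⟨x', y', rfl, rfl, hR⟩ | ⟨x', y', rfl, rfl, hPr⟩)
    · obtain ⟨i, k, Lf, hx', hy'⟩ := (Hf.graph x' y').mp hR
      obtain ⟨j, Lg⟩ := Hg.total k (Hf.br Lf)
      refine ⟨i, k, j, Lf, Lg, ?_, ?_⟩
      · rcases hx' with rfl | rfl
        · exact Or.inl rfl
        · exact Or.inr (Or.inl rfl)
      · rcases hy' with rfl | rfl
        · exact Or.inl rfl
        · exact Or.inr (Or.inl rfl)
    · obtain ⟨k, j, Lg, hx', hy'⟩ := (Hg.graph x' y').mp hPr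
      obtain ⟨i, Lf⟩ := Hf.surj k (Hg.bl Lg)
      refine ⟨i, k, j, Lf, Lg, ?_, ?_⟩
      · rcases hx' with rfl | rfl
        · exact Or.inr (Or.inl rfl)
        · exact Or.inr (Or.inr rfl)
      · rcases hy' with rfl | rfl
        · exact Or.inr (Or.inl rfl)
        · exact Or.inr (Or.inr rfl)
  have hGcomp : (g ⬝ f).G = gComp g.G f.G := rfl
  intro u v
  rw [hGcomp, gComp_eq]
  constructor
  · intro h
    have hE : Thread (Linked f) (Linked g) (Sum.map id Sum.inr u) (Sum.map id Sum.inr v) := by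
      have := Relation.TransGen.mono (fun a b => stepE a b) _ _ h
      rwa [@Relation.transGen_eq_self _ (Thread (Linked f) (Linked g)) ⟨fun _ _ _ h₁ h₂ => Etrans h₁ h₂⟩] at this
    obtain ⟨i, k, j, Lf, Lg, hx, hy⟩ := hE
    refine ⟨i, j, ⟨k, Lf, Lg⟩, ?_, ?_⟩
    · cases u with
      | inl n => rcases hx with h' | h' | h' <;> simp_all
      | inr m => rcases hx with h' | h' | h' <;> simp_all
    · cases v with
      | inl n => rcases hy with h' | h' | h' <;> simp_all
      | inr m => rcases hy with h' | h' | h' <;> simp_all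
  · rintro ⟨i, j, ⟨k, Lf, Lg⟩, hu, hv⟩
    have s1 : CompStep f.G g.G (Sum.inl i) (Sum.inr (Sum.inl k)) :=
      Or.inl ⟨Sum.inl i, Sum.inr k, rfl, rfl,
        (Hf.graph _ _).mpr ⟨i, k, Lf, Or.inl rfl, Or.inr rfl⟩⟩
    have s1' : CompStep f.G g.G (Sum.inr (Sum.inl k)) (Sum.inl i) :=
      Or.inl ⟨Sum.inr k, Sum.inl i, rfl, rfl,
        (Hf.graph _ _).mpr ⟨i, k, Lf, Or.inr rfl, Or.inl rfl⟩⟩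
    have s2 : CompStep f.G g.G (Sum.inr (Sum.inl k)) (Sum.inr (Sum.inr j)) :=
      Or.inr ⟨Sum.inl k, Sum.inr j, rfl, rfl,
        (Hg.graph _ _).mpr ⟨k, j, Lg, Or.inl rfl, Or.inr rfl⟩⟩
    have s2' : CompStep f.G g.G (Sum.inr (Sum.inr j)) (Sum.inr (Sum.inl k)) :=
      Or.inr ⟨Sum.inr j, Sum.inl k, rfl, rfl,
        (Hg.graph _ _).mpr ⟨k, j, Lg, Or.inr rfl, Or.inl rfl⟩⟩
    have sLL : CompStep f.G g.G (Sum.inl i) (Sum.inl i) :=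
      Or.inl ⟨Sum.inl i, Sum.inl i, rfl, rfl,
        (Hf.graph _ _).mpr ⟨i, k, Lf, Or.inl rfl, Or.inl rfl⟩⟩
    have sRR : CompStep f.G g.G (Sum.inr (Sum.inr j)) (Sum.inr (Sum.inr j)) :=
      Or.inr ⟨Sum.inr j, Sum.inr j, rfl, rfl,
        (Hg.graph _ _).mpr ⟨k, j, Lg, Or.inr rfl, Or.inr rfl⟩⟩
    rcases hu with rfl | rfl <;> rcases hv with rfl | rfl
    · exact Relation.TransGen.single sLL
    · exact Relation.TransGen.head s1 (Relation.TransGen.single s2)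
    · exact Relation.TransGen.head s2' (Relation.TransGen.single s1')
    · exact Relation.TransGen.single sRR

lemma linked_comp {A B C : Form P} (g : Term P B C) (f : Term P A B)
    (Hg : Good g) (Hf : Good f) (i j : ℕ) :
    Linked (g ⬝ f) i j ↔ ∃ k, Linked f i k ∧ Linked g k j := by
  constructor
  · intro h
    obtain ⟨i', j', hk, hu, hv⟩ := (comp_char g f Hg Hf (Sum.inl i) (Sum.inr j)).mp h
    rcases hu with h' | h' <;> rcases hv with h'' | h'' <;> simp_all
  · intro ⟨k, Lf, Lg⟩
    exact (comp_char g f Hg Hf (Sum.inl i) (Sum.inr j)).mpr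
      ⟨i, j, ⟨k, Lf, Lg⟩, Or.inl rfl, Or.inr rfl⟩

lemma good_comp {A B C : Form P} (g : Term P B C) (f : Term P A B)
    (Hg : Good g) (Hf : Good f) : Good (g ⬝ f) := by
  have char := comp_char g f Hg Hf
  have hlink := linked_comp g f Hg Hf
  refine ⟨?_, ?_, ?_, ?_, ?_, ?_, ?_⟩
  · intro u v
    rw [char u v]
    constructor
    · rintro ⟨i, j, hk, hu, hv⟩
      exact ⟨i, j, (hlink i j).mpr hk, hu, hv⟩
    · rintro ⟨i, j, hL, hu, hv⟩
      exact ⟨i, j, (hlink i j).mp hL, hu, hv⟩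
  · intro i j j' h1 h2
    obtain ⟨k, Lf, Lg⟩ := (hlink i j).mp h1
    obtain ⟨k', Lf', Lg'⟩ := (hlink i j').mp h2
    have hk : k = k' := Hf.func Lf Lf'
    exact Hg.func (hk ▸ Lg) Lg'
  · intro i i' j h1 h2
    obtain ⟨k, Lf, Lg⟩ := (hlink i j).mp h1
    obtain ⟨k', Lf', Lg'⟩ := (hlink i' j).mp h2
    have hk : k = k' := Hg.inj Lg Lg'
    exact Hf.inj (hk ▸ Lf) Lf'
  · intro i hi
    obtain ⟨k, Lf⟩ := Hf.total i hi
    obtain ⟨j, Lg⟩ := Hg.total k (Hf.br Lf)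
    exact ⟨j, (hlink i j).mpr ⟨k, Lf, Lg⟩⟩
  · intro j hj
    obtain ⟨k, Lg⟩ := Hg.surj j hj
    obtain ⟨i, Lf⟩ := Hf.surj k (Hg.bl Lg)
    exact ⟨i, (hlink i j).mpr ⟨k, Lf, Lg⟩⟩
  · intro i j h
    obtain ⟨k, Lf, _⟩ := (hlink i j).mp h
    exact Hf.bl Lf
  · intro i j h
    obtain ⟨k, _, Lg⟩ := (hlink i j).mp h
    exact Hg.br Lg

/-- Every arrow term of DS has a bijective split relation. -/
lemma good : ∀ {A B : Form P} (f : Term P A B), Good f := by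
  intro A B f
  induction f with
  | id A => exact good_gId _ rfl rfl
  | comp g f ihg ihf => exact good_comp _ _ ihg ihf
  | @conj A B D E f g ihf ihg =>
    exact good_gPar f g _ rfl (by simp [Form.size]) (by simp [Form.size]) ihf ihg
  | @disj A B D E f g ihf ihg =>
    exact good_gPar f g _ rfl (by simp [Form.size]) (by simp [Form.size]) ihf ihg
  | bConjTo A B C => exact good_gId _ rfl (by simp [Form.size]; omega)
  | bConjFrom A B C => exact good_gId _ rfl (by simp [Form.size]; omega)
  | bDisjTo A B C => exact good_gId _ rfl (by simp [Form.size]; omega)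
  | bDisjFrom A B C => exact good_gId _ rfl (by simp [Form.size]; omega)
  | cConj A B =>
    exact good_gSwap _ A.size B.size rfl (by simp [Form.size]) (by simp [Form.size]; omega)
  | cDisj A B =>
    exact good_gSwap _ B.size A.size rfl (by simp [Form.size]) (by simp [Form.size]; omega)
  | d A B C => exact good_gId _ rfl (by simp [Form.size]; omega)

lemma linked_gId {A B : Form P} (f : Term P A B) (N : ℕ) (hG : f.G = gId N)
    {i j : ℕ} (h : Linked f i j) : j = i := by
  unfold Linked at h
  rw [hG] at h
  rcases h with ⟨k, hk, h1 | h1, h2 | h2⟩ <;> simp_all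

lemma linked_gSwap {A B : Form P} (f : Term P A B) (a b : ℕ) (hG : f.G = gSwap a b)
    {i j : ℕ} (h : Linked f i j) :
    i < a + b ∧ j = (if i < a then i + b else i - a) := by
  unfold Linked at h
  rw [hG] at h
  rcases h with ⟨k, hk, h1 | h1, h2 | h2⟩ <;> simp_all

end Lemma3D
namespace Lemma3D

variable {P : Type}

lemma dsep_assoc_conj (A B C : Form P) (n₁ n₂ : ℕ) :
    DSep (A ⋏ (B ⋏ C)) n₁ n₂ ↔ DSep ((A ⋏ B) ⋏ C) n₁ n₂ := by
  simp only [DSep, Form.size, Nat.sub_sub]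
  constructor
  · rintro (⟨h1, h2, hd⟩ | ⟨h1, h2, h3, h4, ⟨g1, g2, gd⟩ | ⟨g1, g2, g3, g4, gd⟩⟩)
    · exact Or.inl ⟨by omega, by omega, Or.inl ⟨h1, h2, hd⟩⟩
    · exact Or.inl ⟨by omega, by omega,
        Or.inr ⟨by omega, by omega, by omega, by omega, gd⟩⟩
    · exact Or.inr ⟨by omega, by omega, by omega, by omega, gd⟩
  · rintro (⟨h1, h2, ⟨g1, g2, gd⟩ | ⟨g1, g2, g3, g4, gd⟩⟩ | ⟨h1, h2, h3, h4, hd⟩)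
    · exact Or.inl ⟨by omega, by omega, gd⟩
    · exact Or.inr ⟨by omega, by omega, by omega, by omega,
        Or.inl ⟨by omega, by omega, gd⟩⟩
    · exact Or.inr ⟨by omega, by omega, by omega, by omega,
        Or.inr ⟨by omega, by omega, by omega, by omega, hd⟩⟩

lemma dsep_assoc_disj (A B C : Form P) (n₁ n₂ : ℕ) :
    DSep (A ⋎ (B ⋎ C)) n₁ n₂ ↔ DSep ((A ⋎ B) ⋎ C) n₁ n₂ := by
  simp only [DSep, Form.size, Nat.sub_sub]
  constructor
  · rintro (⟨h1, h2, hd⟩ |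
      ⟨h1, h2, h3, h4, ⟨g1, g2, gd⟩ | ⟨g1, g2, g3, g4, gd⟩ | ⟨g1, g2, g3⟩⟩ |
      ⟨h1, h2, h3⟩)
    · exact Or.inl ⟨by omega, by omega, Or.inl ⟨h1, h2, hd⟩⟩
    · exact Or.inl ⟨by omega, by omega,
        Or.inr (Or.inl ⟨by omega, by omega, by omega, by omega, gd⟩)⟩
    · exact Or.inr (Or.inl ⟨by omega, by omega, by omega, by omega, gd⟩)
    · exact Or.inr (Or.inr ⟨by omega, by omega, by omega⟩)
    · by_cases hc : n₂ < A.size + B.size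
      · exact Or.inl ⟨by omega, by omega, Or.inr (Or.inr ⟨by omega, by omega, by omega⟩)⟩
      · exact Or.inr (Or.inr ⟨by omega, by omega, by omega⟩)
  · rintro (⟨h1, h2, ⟨g1, g2, gd⟩ | ⟨g1, g2, g3, g4, gd⟩ | ⟨g1, g2, g3⟩⟩ |
      ⟨h1, h2, h3, h4, hd⟩ | ⟨h1, h2, h3⟩)
    · exact Or.inl ⟨by omega, by omega, gd⟩
    · exact Or.inr (Or.inl ⟨by omega, by omega, by omega, by omega,
        Or.inl ⟨by omega, by omega, gd⟩⟩)
    · exact Or.inr (Or.inr ⟨by omega, by omega, by omega⟩)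
    · exact Or.inr (Or.inl ⟨by omega, by omega, by omega, by omega,
        Or.inr (Or.inl ⟨by omega, by omega, by omega, by omega, hd⟩)⟩)
    · by_cases hc : n₁ < A.size
      · exact Or.inr (Or.inr ⟨by omega, by omega, by omega⟩)
      · exact Or.inr (Or.inl ⟨by omega, by omega, by omega, by omega,
          Or.inr (Or.inr ⟨by omega, by omega, by omega⟩)⟩)

lemma dsep_d (A B C : Form P) (n₁ n₂ : ℕ) :
    DSep (A ⋏ (B ⋎ C)) n₁ n₂ → DSep ((A ⋏ B) ⋎ C) n₁ n₂ := by
  simp only [DSep, Form.size, Nat.sub_sub]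
  rintro (⟨h1, h2, hd⟩ |
    ⟨h1, h2, h3, h4, ⟨g1, g2, gd⟩ | ⟨g1, g2, g3, g4, gd⟩ | ⟨g1, g2, g3⟩⟩)
  · exact Or.inl ⟨by omega, by omega, Or.inl ⟨h1, h2, hd⟩⟩
  · exact Or.inl ⟨by omega, by omega,
      Or.inr ⟨by omega, by omega, by omega, by omega, gd⟩⟩
  · exact Or.inr (Or.inl ⟨by omega, by omega, by omega, by omega, gd⟩)
  · exact Or.inr (Or.inr ⟨by omega, by omega, by omega⟩)

/-- The key combinatorial lemma: links of a DS arrow term preserve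
disjunction-separation up to swapping the two sides. -/
lemma main : ∀ {A B : Form P} (f : Term P A B) (n₁ n₂ m₁ m₂ : ℕ),
    Linked f n₁ m₁ → Linked f n₂ m₂ → DSep A n₁ n₂ →
    DSep B m₁ m₂ ∨ DSep B m₂ m₁ := by
  intro A B f
  induction f with
  | id A =>
    intro n₁ n₂ m₁ m₂ h1 h2 hd
    obtain rfl := linked_gId (Term.id A) A.size rfl h1
    obtain rfl := linked_gId (Term.id A) A.size rfl h2
    exact Or.inl hd
  | @comp A B C g f ihg ihf =>
    intro n₁ n₂ m₁ m₂ h1 h2 hd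
    obtain ⟨k₁, hf1, hg1⟩ := (linked_comp g f (good g) (good f) _ _).mp h1
    obtain ⟨k₂, hf2, hg2⟩ := (linked_comp g f (good g) (good f) _ _).mp h2
    rcases ihf n₁ n₂ k₁ k₂ hf1 hf2 hd with hB | hB
    · exact ihg k₁ k₂ m₁ m₂ hg1 hg2 hB
    · exact (ihg k₂ k₁ m₂ m₁ hg2 hg1 hB).symm
  | @conj A B D E f g ihf ihg =>
    intro n₁ n₂ m₁ m₂ h1 h2 hd
    have Hf := good f
    have Hg := good g
    rw [linked_gPar (f ⊼ g) A.size D.size f.G g.G rfl] at h1 h2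
    simp only [DSep, Form.size] at hd ⊢
    rcases hd with ⟨b1, b2, hdA⟩ | ⟨b1, b2, b3, b4, hdB⟩
    · rcases h1 with h1 | ⟨i1, j1, hg1, hi1, hj1⟩
      · rcases h2 with h2 | ⟨i2, j2, hg2, hi2, hj2⟩
        · have hb1 := Hf.br h1
          have hb2 := Hf.br h2
          rcases ihf n₁ n₂ m₁ m₂ h1 h2 hdA with hD | hD
          · exact Or.inl (Or.inl ⟨hb1, hb2, hD⟩)
          · exact Or.inr (Or.inl ⟨hb2, hb1, hD⟩)
        · omega
      · omega
    · rcases h1 with h1 | ⟨i1, j1, hg1, hi1, hj1⟩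
      · have := Hf.bl h1; omega
      · rcases h2 with h2 | ⟨i2, j2, hg2, hi2, hj2⟩
        · have := Hf.bl h2; omega
        · have e1 : n₁ - A.size = i1 := by omega
          have e2 : n₂ - A.size = i2 := by omega
          rw [e1, e2] at hdB
          have hb1 := Hg.br hg1
          have hb2 := Hg.br hg2
          have e1' : m₁ - D.size = j1 := by omega
          have e2' : m₂ - D.size = j2 := by omega
          rcases ihg i1 i2 j1 j2 hg1 hg2 hdB with hD | hD
          · refine Or.inl (Or.inr ⟨by omega, by omega, by omega, by omega, ?_⟩)
            rw [e1', e2']; exact hD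
          · refine Or.inr (Or.inr ⟨by omega, by omega, by omega, by omega, ?_⟩)
            rw [e1', e2']; exact hD
  | @disj A B D E f g ihf ihg =>
    intro n₁ n₂ m₁ m₂ h1 h2 hd
    have Hf := good f
    have Hg := good g
    rw [linked_gPar (f ⊽ g) A.size D.size f.G g.G rfl] at h1 h2
    simp only [DSep, Form.size] at hd ⊢
    rcases hd with ⟨b1, b2, hdA⟩ | ⟨b1, b2, b3, b4, hdB⟩ | ⟨b1, b2, b3⟩
    · rcases h1 with h1 | ⟨i1, j1, hg1, hi1, hj1⟩
      · rcases h2 with h2 | ⟨i2, j2, hg2, hi2, hj2⟩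
        · have hb1 := Hf.br h1
          have hb2 := Hf.br h2
          rcases ihf n₁ n₂ m₁ m₂ h1 h2 hdA with hD | hD
          · exact Or.inl (Or.inl ⟨hb1, hb2, hD⟩)
          · exact Or.inr (Or.inl ⟨hb2, hb1, hD⟩)
        · omega
      · omega
    · rcases h1 with h1 | ⟨i1, j1, hg1, hi1, hj1⟩
      · have := Hf.bl h1; omega
      · rcases h2 with h2 | ⟨i2, j2, hg2, hi2, hj2⟩
        · have := Hf.bl h2; omega
        · have e1 : n₁ - A.size = i1 := by omega
          have e2 : n₂ - A.size = i2 := by omega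
          rw [e1, e2] at hdB
          have hb1 := Hg.br hg1
          have hb2 := Hg.br hg2
          have e1' : m₁ - D.size = j1 := by omega
          have e2' : m₂ - D.size = j2 := by omega
          rcases ihg i1 i2 j1 j2 hg1 hg2 hdB with hD | hD
          · refine Or.inl (Or.inr (Or.inl ⟨by omega, by omega, by omega, by omega, ?_⟩))
            rw [e1', e2']; exact hD
          · refine Or.inr (Or.inr (Or.inl ⟨by omega, by omega, by omega, by omega, ?_⟩))
            rw [e1', e2']; exact hD
    · rcases h1 with h1 | ⟨i1, j1, hg1, hi1, hj1⟩
      · rcases h2 with h2 | ⟨i2, j2, hg2, hi2, hj2⟩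
        · have := Hf.bl h2; omega
        · have hb1 := Hf.br h1
          have hb2 := Hg.br hg2
          exact Or.inl (Or.inr (Or.inr ⟨by omega, by omega, by omega⟩))
      · omega
  | bConjTo A B C =>
    intro n₁ n₂ m₁ m₂ h1 h2 hd
    obtain rfl := linked_gId (Term.bConjTo A B C) _ rfl h1
    obtain rfl := linked_gId (Term.bConjTo A B C) _ rfl h2
    exact Or.inl ((dsep_assoc_conj A B C _ _).mp hd)
  | bConjFrom A B C =>
    intro n₁ n₂ m₁ m₂ h1 h2 hd
    obtain rfl := linked_gId (Term.bConjFrom A B C) _ rfl h1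
    obtain rfl := linked_gId (Term.bConjFrom A B C) _ rfl h2
    exact Or.inl ((dsep_assoc_conj A B C _ _).mpr hd)
  | bDisjTo A B C =>
    intro n₁ n₂ m₁ m₂ h1 h2 hd
    obtain rfl := linked_gId (Term.bDisjTo A B C) _ rfl h1
    obtain rfl := linked_gId (Term.bDisjTo A B C) _ rfl h2
    exact Or.inl ((dsep_assoc_disj A B C _ _).mp hd)
  | bDisjFrom A B C =>
    intro n₁ n₂ m₁ m₂ h1 h2 hd
    obtain rfl := linked_gId (Term.bDisjFrom A B C) _ rfl h1
    obtain rfl := linked_gId (Term.bDisjFrom A B C) _ rfl h2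
    exact Or.inl ((dsep_assoc_disj A B C _ _).mpr hd)
  | cConj A B =>
    intro n₁ n₂ m₁ m₂ h1 h2 hd
    obtain ⟨hn1, hm1⟩ := linked_gSwap (Term.cConj A B) A.size B.size rfl h1
    obtain ⟨hn2, hm2⟩ := linked_gSwap (Term.cConj A B) A.size B.size rfl h2
    simp only [DSep, Form.size] at hd ⊢
    rcases hd with ⟨b1, b2, hdA⟩ | ⟨b1, b2, b3, b4, hdB⟩
    · rw [if_pos b1] at hm1
      rw [if_pos b2] at hm2
      refine Or.inl (Or.inr ⟨by omega, by omega, by omega, by omega, ?_⟩)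
      have e1 : m₁ - B.size = n₁ := by omega
      have e2 : m₂ - B.size = n₂ := by omega
      rw [e1, e2]; exact hdA
    · rw [if_neg (by omega)] at hm1
      rw [if_neg (by omega)] at hm2
      refine Or.inl (Or.inl ⟨by omega, by omega, ?_⟩)
      rw [hm1, hm2]; exact hdB
  | cDisj A B =>
    intro n₁ n₂ m₁ m₂ h1 h2 hd
    obtain ⟨hn1, hm1⟩ := linked_gSwap (Term.cDisj A B) B.size A.size rfl h1
    obtain ⟨hn2, hm2⟩ := linked_gSwap (Term.cDisj A B) B.size A.size rfl h2
    simp only [DSep, Form.size] at hd ⊢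
    rcases hd with ⟨b1, b2, hdB⟩ | ⟨b1, b2, b3, b4, hdA⟩ | ⟨b1, b2, b3⟩
    · rw [if_pos b1] at hm1
      rw [if_pos b2] at hm2
      refine Or.inl (Or.inr (Or.inl ⟨by omega, by omega, by omega, by omega, ?_⟩))
      have e1 : m₁ - A.size = n₁ := by omega
      have e2 : m₂ - A.size = n₂ := by omega
      rw [e1, e2]; exact hdB
    · rw [if_neg (by omega)] at hm1
      rw [if_neg (by omega)] at hm2
      refine Or.inl (Or.inl ⟨by omega, by omega, ?_⟩)
      rw [hm1, hm2]; exact hdA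
    · rw [if_pos b1] at hm1
      rw [if_neg (by omega)] at hm2
      exact Or.inr (Or.inr (Or.inr ⟨by omega, by omega, by omega⟩))
  | d A B C =>
    intro n₁ n₂ m₁ m₂ h1 h2 hd
    obtain rfl := linked_gId (Term.d A B C) _ rfl h1
    obtain rfl := linked_gId (Term.d A B C) _ rfl h2
    exact Or.inl (dsep_d A B C _ _ hd)

end Lemma3D

/-- **Lemma 3D**: let `f : A ⊢ B` be an arrow term of DS, and for `i ∈ {1,2}` let
`x_i` in `A` and `y_i` in `B` be occurrences of the letter `p_i` that are linked
in `f`. If `A` has a subformula occurrence `A₁ ∨ A₂` such that `x_i` occurs in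
`A_i`, then `B` has a subformula occurrence `B₁ ∨ B₂` or `B₂ ∨ B₁` such that
`y_i` occurs in `B_i`. -/
theorem lemma_3D {P : Type} {A B : Form P} (f : Term P A B) (p₁ p₂ : P)
    (π₁ π₂ ρ₁ ρ₂ : List Dir)
    (hx₁ : A.subAt π₁ = some (Form.letter p₁)) (hx₂ : A.subAt π₂ = some (Form.letter p₂))
    (hy₁ : B.subAt ρ₁ = some (Form.letter p₁)) (hy₂ : B.subAt ρ₂ = some (Form.letter p₂))
    (hl₁ : Linked f (A.offsetAt π₁) (B.offsetAt ρ₁))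
    (hl₂ : Linked f (A.offsetAt π₂) (B.offsetAt ρ₂))
    (π : List Dir) (A₁ A₂ : Form P)
    (hsub : A.subAt π = some (A₁ ⋎ A₂))
    (h₁ : ∃ σ, π₁ = π ++ (Dir.l :: σ)) (h₂ : ∃ σ, π₂ = π ++ (Dir.r :: σ)) :
    ∃ (ρ : List Dir) (B₁ B₂ : Form P), B.subAt ρ = some (B₁ ⋎ B₂) ∧
      (((∃ σ, ρ₁ = ρ ++ (Dir.l :: σ)) ∧ (∃ σ, ρ₂ = ρ ++ (Dir.r :: σ))) ∨
       ((∃ σ, ρ₂ = ρ ++ (Dir.l :: σ)) ∧ (∃ σ, ρ₁ = ρ ++ (Dir.r :: σ)))) := by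
  obtain ⟨σ₁, rfl⟩ := h₁
  obtain ⟨σ₂, rfl⟩ := h₂
  have hsep := Lemma3D.path_dsep π A A₁ A₂ σ₁ σ₂ p₁ p₂ hsub hx₁ hx₂
  rcases Lemma3D.main f _ _ _ _ hl₁ hl₂ hsep with h | h
  · obtain ⟨ρ, B₁, B₂, hs, e1, e2⟩ := Lemma3D.dsep_path B _ _ ρ₁ ρ₂ p₁ p₂ h hy₁ hy₂ rfl rfl
    exact ⟨ρ, B₁, B₂, hs, Or.inl ⟨e1, e2⟩⟩
  · obtain ⟨ρ, B₁, B₂, hs, e1, e2⟩ := Lemma3D.dsep_path B _ _ ρ₂ ρ₁ p₂ p₁ h hy₂ hy₁ rfl rfl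
    exact ⟨ρ, B₁, B₂, hs, Or.inr ⟨e1, e2⟩⟩
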